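/- Under the same setting, if the discrete metric dynamical system (Ω, F, P, θ_τ) is ergodic, then the continuous-time skew-product system (Ω × X, F ⊗ B(X), μ̄, (Θ̄_t)_{t≥0}) is ergodic, where μ̄ = (1/τ)∫_0^τ μ_s ds. -/

import Mathlib

open MeasureTheory

/-- If the discrete noise system $(Ω, F, P, θ_τ)$ is ergodic, then the continuous-time
skew-product system $(Ω × X, μ̄, (Θ̄_t)_{t ≥ 0})$ with $μ̄ = τ^{-1}∫_0^τ μ_s\,ds$ is ergodic. -/
theorem averaged_skew_product_ergodic_of_base_ergodic
    {Ω : Type*} [MeasurableSpace Ω] {X : Type*} [NormedAddCommGroup X]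
    [NormedSpace ℝ X] [CompleteSpace X] [SecondCountableTopology X]
    [MeasurableSpace X] [BorelSpace X]
    (P : Measure Ω) [IsProbabilityMeasure P]
    (θ : ℝ → Ω → Ω)
    (hθmeas : ∀ t, Measurable (θ t))
    (hθgrp : ∀ t s ω, θ t (θ s ω) = θ (t + s) ω)
    (hθ0 : ∀ ω, θ 0 ω = ω)
    (hθinv : ∀ t, MeasurePreserving (θ t) P P)
    (Φ : ℝ → Ω → X → X)
    (hΦmeas : ∀ t, Measurable fun p : Ω × X => Φ t p.1 p.2)
    (hΦ0 : ∀ᵐ ω ∂P, ∀ x, Φ 0 ω x = x)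
    (hΦcoc : ∀ t s, 0 ≤ t → 0 ≤ s → ∀ᵐ ω ∂P, ∀ x,
      Φ (t + s) ω x = Φ t (θ s ω) (Φ s ω x))
    (Y : ℝ → Ω → X)
    (hYmeas : ∀ s, Measurable (Y s))
    (τ : ℝ) (hτ : 0 < τ)
    (hYper : ∀ t s, 0 ≤ t → ∀ᵐ ω ∂P, Φ t (θ s ω) (Y s ω) = Y (t + s) ω)
    (hYτ : ∀ s, ∀ᵐ ω ∂P, Y (s + τ) ω = Y s (θ τ ω))
    (μ : ℝ → Measure (Ω × X))
    (hμ : ∀ s, μ s = Measure.map (fun ω => (ω, Y s (θ (-s) ω))) P)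
    (μbar : Measure (Ω × X))
    (hμbar : ∀ A : Set (Ω × X), MeasurableSet A →
      μbar A = (∫⁻ t in Set.Ioc (0 : ℝ) τ, μ t A) / ENNReal.ofReal τ)
    (herg : ∀ A : Set Ω, MeasurableSet A → θ τ ⁻¹' A = A → P A = 0 ∨ P A = 1) :
    ∀ A : Set (Ω × X), MeasurableSet A →
      (∀ t : ℝ, 0 ≤ t → (fun p : Ω × X => (θ t p.1, Φ t p.1 p.2)) ⁻¹' A = A) →
      μbar A = 0 ∨ μbar A = 1 := by
  intro A hA hinv
  -- the fiber sets
  set C : ℝ → Set Ω := fun s => (fun ω => (θ s ω, Y s ω)) ⁻¹' A with hC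
  have hCmeas : ∀ s, MeasurableSet (C s) := fun s =>
    ((hθmeas s).prodMk (hYmeas s)) hA
  -- μ s A = P (C s)
  have hμC : ∀ s, μ s A = P (C s) := by
    intro s
    have hmap : Measurable (fun ω => (ω, Y s (θ (-s) ω))) :=
      measurable_id.prodMk ((hYmeas s).comp (hθmeas (-s)))
    rw [hμ s, Measure.map_apply hmap hA]
    have hpre : θ s ⁻¹' ((fun ω => (ω, Y s (θ (-s) ω))) ⁻¹' A) = C s := by
      ext ω
      simp only [Set.mem_preimage, hC, hθgrp, neg_add_cancel, hθ0]
    rw [← hpre]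
    exact ((hθinv s).measure_preimage (hmap hA).nullMeasurableSet).symm
  -- the fiber sets are a.e. constant in s
  have key : ∀ t s : ℝ, 0 ≤ t → C s =ᵐ[P] C (t + s) := by
    intro t s ht
    rw [Filter.eventuallyEq_set]
    filter_upwards [hYper t s ht] with ω hω
    have h1 : ω ∈ C s ↔ (θ s ω, Y s ω) ∈ A := Iff.rfl
    rw [h1, ← hinv t ht]
    simp only [Set.mem_preimage, hθgrp, hω]
    exact Iff.rfl
  -- each μ t A for t ∈ (0, τ] equals P (C τ)
  have hconst : ∀ t ∈ Set.Ioc (0 : ℝ) τ, μ t A = P (C τ) := by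
    intro t ht
    rw [hμC t]
    have := measure_congr (key (τ - t) t (by linarith [ht.2]))
    rwa [sub_add_cancel] at this
  -- μbar A = P (C τ)
  have hbar : μbar A = P (C τ) := by
    rw [hμbar A hA]
    have : ∫⁻ t in Set.Ioc (0 : ℝ) τ, μ t A = ∫⁻ _ in Set.Ioc (0 : ℝ) τ, P (C τ) :=
      setLIntegral_congr_fun measurableSet_Ioc hconst
    rw [this, lintegral_const, Measure.restrict_apply_univ, Real.volume_Ioc, sub_zero,
      mul_div_assoc, ENNReal.div_self (by simp [hτ]) ENNReal.ofReal_ne_top,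
      mul_one]
  -- ergodicity of the base as a structure
  have hErg : Ergodic (θ τ) P := by
    refine ⟨hθinv τ, ⟨fun s hs hs' => Filter.eventuallyConst_set'.mpr ?_⟩⟩
    rcases herg s hs hs' with h0 | h1
    · exact Or.inl (ae_eq_empty.mpr h0)
    · exact Or.inr (ae_eq_univ.mpr ((prob_compl_eq_zero_iff hs).mpr h1))
  -- C τ is a.e. invariant under θ τ
  have hInv : θ τ ⁻¹' C τ =ᵐ[P] C τ := by
    have h1 : θ τ ⁻¹' C τ =ᵐ[P] C (τ + τ) := by
      rw [Filter.eventuallyEq_set]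
      filter_upwards [hYτ τ] with ω hω
      simp only [Set.mem_preimage, hC, hθgrp, hω]
    exact h1.trans ((key τ τ hτ.le).symm)
  rcases hErg.quasiErgodic.ae_empty_or_univ₀ (hCmeas τ).nullMeasurableSet hInv with h | h
  · left; rw [hbar, measure_congr h, measure_empty]
  · right; rw [hbar, measure_congr h, measure_univ]
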